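/- For two power-flow states of the two-bus network that have the same generator voltage magnitude |V_g| = v, with net powers (P_n⁽¹⁾, Q_n⁽¹⁾) and (P_n⁽²⁾, Q_n⁽²⁾) and line losses P_l⁽¹⁾ and P_l⁽²⁾ respectively, the change in losses satisfies P_l⁽¹⁾ − P_l⁽²⁾ = (2R/|Z|²)·(R·(P_n⁽¹⁾ − P_n⁽²⁾) + X·(Q_n⁽¹⁾ − Q_n⁽²⁾)). -/

import Mathlib

/-- For two power-flow states of the two-bus network with the same generator voltage
magnitude `|V_g| = v`, the change in line losses satisfies
`P_l⁽¹⁾ − P_l⁽²⁾ = (2R/|Z|²)·(R·(P_n⁽¹⁾ − P_n⁽²⁾) + X·(Q_n⁽¹⁾ − Q_n⁽²⁾))`. -/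
theorem loss_difference_same_voltage
    (R X Vt v : ℝ) (hR : 0 < R) (hX : 0 < X) (hVt : 0 < Vt) (hv : 0 < v)
    (Vg1 Vg2 : ℂ) (h1 : ‖Vg1‖ = v) (h2 : ‖Vg2‖ = v) :
    let Z : ℂ := ⟨R, X⟩
    let I1 : ℂ := (Vg1 - (Vt : ℂ)) / Z
    let I2 : ℂ := (Vg2 - (Vt : ℂ)) / Z
    let Sn1 : ℂ := Vg1 * (starRingEnd ℂ) I1
    let Sn2 : ℂ := Vg2 * (starRingEnd ℂ) I2
    let Pl1 : ℝ := R * ‖I1‖ ^ 2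
    let Pl2 : ℝ := R * ‖I2‖ ^ 2
    Pl1 - Pl2 = 2 * R / ‖Z‖ ^ 2 *
      (R * (Sn1.re - Sn2.re) + X * (Sn1.im - Sn2.im)) := by
  intro Z I1 I2 Sn1 Sn2 Pl1 Pl2
  have hZ : R ^ 2 + X ^ 2 ≠ 0 := by positivity
  have e1 : Vg1.re ^ 2 + Vg1.im ^ 2 = v ^ 2 := by
    rw [← h1, Complex.sq_norm, Complex.normSq_apply]; ring
  have e2 : Vg2.re ^ 2 + Vg2.im ^ 2 = v ^ 2 := by
    rw [← h2, Complex.sq_norm, Complex.normSq_apply]; ring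
  simp only [Pl1, Pl2, Sn1, Sn2, I1, I2, Z, Complex.sq_norm, Complex.normSq_apply,
    Complex.div_re, Complex.div_im, Complex.mul_re, Complex.mul_im, Complex.sub_re,
    Complex.sub_im, Complex.ofReal_re, Complex.ofReal_im, Complex.conj_re, Complex.conj_im]
  field_simp
  linear_combination (-(R^2+X^2)) * e1 + (R^2+X^2) * e2
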